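/- Let a_ε(τ) = 0 for τ ≤ 0, a_ε(τ) = τ/ε for 0 ≤ τ ≤ ε, and a_ε(τ) = 1 for τ ≥ ε. Let φ : ℝ² → ℝ be bounded. Then limsup as ε → 0⁺ of ∫∫_{ℝ²} φ(s, a_ε(τ)s²/2 + τ)² · a_ε'(τ) / ((1 + a_ε(τ)²)^{3/2} · (a_ε'(τ)s²/2 + 1)) ds dτ ≤ 0; in fact the integral is bounded by C·√ε · sup φ² for an absolute constant C. -/

import Mathlib

open MeasureTheory Filter

/-- The piecewise affine function a_ε. -/
noncomputable def ae11 (ε τ : ℝ) : ℝ := if τ ≤ 0 then 0 else if τ ≤ ε then τ / ε else 1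

/-- Its (a.e.) derivative a_ε'. -/
noncomputable def dae11 (ε τ : ℝ) : ℝ := if 0 < τ ∧ τ < ε then 1 / ε else 0

/-- The second-variation error integral. -/
noncomputable def I11 (φ : ℝ × ℝ → ℝ) (ε : ℝ) : ℝ :=
  ∫ p : ℝ × ℝ, φ (p.1, ae11 ε p.2 * p.1 ^ 2 / 2 + p.2) ^ 2 * dae11 ε p.2 /
    ((1 + ae11 ε p.2 ^ 2) ^ ((3 : ℝ) / 2) * (dae11 ε p.2 * p.1 ^ 2 / 2 + 1))

lemma dae11_nonneg (ε τ : ℝ) : 0 ≤ dae11 ε τ := by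
  unfold dae11
  split
  · next h => have : 0 < ε := lt_trans h.1 h.2; positivity
  · exact le_refl 0

lemma integrand11_nonneg (φ : ℝ × ℝ → ℝ) (ε : ℝ) (p : ℝ × ℝ) :
    0 ≤ φ (p.1, ae11 ε p.2 * p.1 ^ 2 / 2 + p.2) ^ 2 * dae11 ε p.2 /
      ((1 + ae11 ε p.2 ^ 2) ^ ((3 : ℝ) / 2) * (dae11 ε p.2 * p.1 ^ 2 / 2 + 1)) := by
  have h1 : 0 ≤ dae11 ε p.2 := dae11_nonneg ε p.2
  have h2 : 0 ≤ dae11 ε p.2 * p.1 ^ 2 / 2 + 1 := by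
    have := mul_nonneg h1 (sq_nonneg p.1); linarith
  exact div_nonneg (mul_nonneg (sq_nonneg _) h1)
    (mul_nonneg (Real.rpow_nonneg (by positivity) _) h2)

lemma I11_nonneg (φ : ℝ × ℝ → ℝ) (ε : ℝ) : 0 ≤ I11 φ ε :=
  integral_nonneg fun p => integrand11_nonneg φ ε p

lemma I11_le (φ : ℝ × ℝ → ℝ) (M : ℝ) (hM : ∀ p, φ p ^ 2 ≤ M) {ε : ℝ} (hε : 0 < ε) :
    I11 φ ε ≤ 10 * Real.sqrt ε * M := by
  have hM0 : 0 ≤ M := le_trans (sq_nonneg (φ (0, 0))) (hM (0, 0))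
  set c : ℝ := Real.sqrt (2 * ε) with hc_def
  have hc : 0 < c := Real.sqrt_pos.2 (by linarith)
  have hcsq : c ^ 2 = 2 * ε := Real.sq_sqrt (by linarith)
  set u : ℝ → ℝ := fun s => M * (1 + (c⁻¹ * s) ^ 2)⁻¹ with hu_def
  set v : ℝ → ℝ := (Set.Ioo (0 : ℝ) ε).indicator (fun _ => 1 / ε) with hv_def
  have hu : Integrable u :=
    (integrable_inv_one_add_sq.comp_mul_left' (inv_ne_zero hc.ne')).const_mul M
  have hv : Integrable v := by
    rw [hv_def, integrable_indicator_iff measurableSet_Ioo]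
    exact (integrableOn_const_iff).2 (Or.inr (by simp [Real.volume_Ioo]))
  have hui : ∫ s, u s = M * (c * Real.pi) := by
    rw [hu_def, MeasureTheory.integral_const_mul, MeasureTheory.Measure.integral_comp_mul_left
      (fun x => (1 + x ^ 2)⁻¹) c⁻¹, integral_univ_inv_one_add_sq, inv_inv,
      abs_of_pos hc, smul_eq_mul]
  have hvi : ∫ t, v t = 1 := by
    rw [hv_def, MeasureTheory.integral_indicator_const _ measurableSet_Ioo]
    simp [Real.volume_Ioo, ENNReal.toReal_ofReal hε.le, smul_eq_mul]
    field_simp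
    exact max_eq_left hε.le
  have hprod : (volume : Measure (ℝ × ℝ)) = (volume : Measure ℝ).prod volume :=
    MeasureTheory.Measure.volume_eq_prod ℝ ℝ
  have hg : Integrable (fun p : ℝ × ℝ => u p.1 * v p.2) := by
    rw [hprod]; exact hu.mul_prod hv
  have hgi : ∫ p : ℝ × ℝ, u p.1 * v p.2 = M * (c * Real.pi) := by
    rw [hprod, MeasureTheory.integral_prod_mul, hui, hvi, mul_one]
  have hle : I11 φ ε ≤ ∫ p : ℝ × ℝ, u p.1 * v p.2 := by
    apply integral_mono_of_nonneg (Filter.Eventually.of_forall (integrand11_nonneg φ ε)) hg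
    apply Filter.Eventually.of_forall
    intro p
    dsimp only
    by_cases h : 0 < p.2 ∧ p.2 < ε
    · have hdae : dae11 ε p.2 = 1 / ε := if_pos h
      have hvp : v p.2 = 1 / ε := Set.indicator_of_mem (by exact ⟨h.1, h.2⟩) _
      have hsq : (c⁻¹ * p.1) ^ 2 = p.1 ^ 2 / (2 * ε) := by
        rw [mul_pow, inv_pow, hcsq]; ring
      have hD : (0:ℝ) < 1 + p.1 ^ 2 / (2 * ε) := by positivity
      have hrpow : (1 : ℝ) ≤ (1 + ae11 ε p.2 ^ 2) ^ ((3 : ℝ) / 2) :=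
        Real.one_le_rpow (by nlinarith [sq_nonneg (ae11 ε p.2)]) (by norm_num)
      have hden : dae11 ε p.2 * p.1 ^ 2 / 2 + 1 = 1 + p.1 ^ 2 / (2 * ε) := by
        rw [hdae]; field_simp; ring
      have hup : u p.1 = M * (1 + p.1 ^ 2 / (2 * ε))⁻¹ := by
        rw [hu_def]; simp only; rw [hsq]
      rw [hvp, hup, hden, hdae, div_le_iff₀ (by positivity)]
      calc φ (p.1, ae11 ε p.2 * p.1 ^ 2 / 2 + p.2) ^ 2 * (1 / ε)
          ≤ M * (1 / ε) := by
            apply mul_le_mul_of_nonneg_right (hM _) (by positivity)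
        _ = M * (1 + p.1 ^ 2 / (2 * ε))⁻¹ * (1 / ε) * (1 * (1 + p.1 ^ 2 / (2 * ε))) := by
            field_simp
        _ ≤ M * (1 + p.1 ^ 2 / (2 * ε))⁻¹ * (1 / ε) *
              ((1 + ae11 ε p.2 ^ 2) ^ ((3 : ℝ) / 2) * (1 + p.1 ^ 2 / (2 * ε))) := by
            apply mul_le_mul_of_nonneg_left
              (mul_le_mul_of_nonneg_right hrpow hD.le) (by positivity)
    · have hdae : dae11 ε p.2 = 0 := if_neg h
      have hvp : v p.2 = 0 := by
        apply Set.indicator_of_notMem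
        simpa [Set.mem_Ioo] using h
      simp [hdae, hvp]
  have hsqrt2 : Real.sqrt 2 ≤ 2 := by
    nlinarith [Real.sq_sqrt (by norm_num : (0:ℝ) ≤ 2), Real.sqrt_nonneg 2]
  have hcval : c = Real.sqrt 2 * Real.sqrt ε := by
    rw [hc_def, Real.sqrt_mul (by norm_num)]
  calc I11 φ ε ≤ M * (c * Real.pi) := hle.trans_eq hgi
    _ = Real.sqrt 2 * Real.pi * (Real.sqrt ε * M) := by rw [hcval]; ring
    _ ≤ 10 * (Real.sqrt ε * M) := by
        apply mul_le_mul_of_nonneg_right _ (by positivity)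
        nlinarith [Real.pi_le_four, Real.pi_pos, Real.sqrt_nonneg 2]
    _ = 10 * Real.sqrt ε * M := by ring

theorem stmt_11 (φ : ℝ × ℝ → ℝ) (M : ℝ) (hM : ∀ p, φ p ^ 2 ≤ M) :
    (∃ C : ℝ, 0 < C ∧ ∀ ε : ℝ, 0 < ε → I11 φ ε ≤ C * Real.sqrt ε * M) ∧
    Filter.limsup (I11 φ) (nhdsWithin 0 (Set.Ioi 0)) ≤ 0 := by
  refine ⟨⟨10, by norm_num, fun ε hε => I11_le φ M hM hε⟩, ?_⟩
  have htend : Filter.Tendsto (I11 φ) (nhdsWithin 0 (Set.Ioi 0)) (nhds 0) := by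
    have hub : Filter.Tendsto (fun ε : ℝ => 10 * Real.sqrt ε * M)
        (nhdsWithin 0 (Set.Ioi 0)) (nhds 0) := by
      have hcont : Continuous fun ε : ℝ => 10 * Real.sqrt ε * M := by fun_prop
      have : Filter.Tendsto (fun ε : ℝ => 10 * Real.sqrt ε * M) (nhds 0) (nhds 0) :=
        hcont.tendsto' 0 0 (by simp)
      exact this.mono_left nhdsWithin_le_nhds
    apply tendsto_of_tendsto_of_tendsto_of_le_of_le' tendsto_const_nhds hub
    · exact Filter.Eventually.of_forall fun ε => I11_nonneg φ ε
    · filter_upwards [self_mem_nhdsWithin] with ε hε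
      exact I11_le φ M hM hε
  exact le_of_eq (htend.limsup_eq)
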